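/- arXiv:1905.13228 — 2 statements merged into one kernel-verified Lean document; each statement's English description precedes it below -/
import Mathlib

section
/- Let G be a finite simple graph and let {X_1, …, X_ℓ, Y} be a Godsil–McKay switching partition of its vertex set. Let G' be the switched graph obtained from G and this partition. Then G and G' are cospectral, i.e., the adjacency matrices of G and G' (over ℝ) have equal characteristic polynomials. -/
open Finset SimpleGraph Polynomial

open scoped Classical in
/-- Number of neighbors of `v` inside the finset `S`, in the graph `G`. -/
noncomputable def nbrsIn {V : Type*} (G : SimpleGraph V) (v : V) (S : Finset V) : ℕ :=
  (S.filter (fun w => G.Adj v w)).card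

/-- The `i`-th part `X_i` of a partition of the vertex set encoded by `f`
(`f v = some i` means `v ∈ X_i`, and `f v = none` means `v ∈ Y`). -/
def Xset {V : Type*} [Fintype V] {ℓ : ℕ} (f : V → Option (Fin ℓ)) (i : Fin ℓ) : Finset V :=
  Finset.univ.filter (fun v => f v = some i)

/-- The part `Y` of the partition of the vertex set encoded by `f`. -/
def Yset {V : Type*} [Fintype V] {ℓ : ℕ} (f : V → Option (Fin ℓ)) : Finset V :=
  Finset.univ.filter (fun v => f v = none)

/-- The partition `{X_1, …, X_ℓ, Y}` (encoded by `f`) is a Godsil–McKay switching partition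
of `G`: every `y ∈ Y` has `0`, `|X_i|/2` or `|X_i|` neighbors in each `X_i`, and for all `i, j`,
all vertices of `X_i` have the same number of neighbors in `X_j`. -/
def IsGMPartition {V : Type*} [Fintype V] (G : SimpleGraph V) {ℓ : ℕ}
    (f : V → Option (Fin ℓ)) : Prop :=
  (∀ y ∈ Yset f, ∀ i : Fin ℓ,
      nbrsIn G y (Xset f i) = 0 ∨ 2 * nbrsIn G y (Xset f i) = (Xset f i).card ∨
        nbrsIn G y (Xset f i) = (Xset f i).card) ∧
  (∀ i j : Fin ℓ, ∀ u ∈ Xset f i, ∀ v ∈ Xset f i,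
      nbrsIn G u (Xset f j) = nbrsIn G v (Xset f j))

/-- The pairs of vertices whose adjacency is flipped by the Godsil–McKay switching:
one of them lies in `Y`, the other in some `X_i`, and the former has exactly `|X_i|/2`
neighbors in `X_i`. -/
def gmFlip {V : Type*} [Fintype V] (G : SimpleGraph V) {ℓ : ℕ} (f : V → Option (Fin ℓ))
    (u v : V) : Prop :=
  (∃ i : Fin ℓ, f u = none ∧ f v = some i ∧ 2 * nbrsIn G u (Xset f i) = (Xset f i).card) ∨
  (∃ i : Fin ℓ, f v = none ∧ f u = some i ∧ 2 * nbrsIn G v (Xset f i) = (Xset f i).card)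

/-- The Godsil–McKay switched graph `G'`: adjacency within `X_1 ∪ … ∪ X_ℓ`, or within `Y`,
is as in `G`; adjacency between `y ∈ Y` and `x ∈ X_i` is complemented exactly when `y` has
`|X_i|/2` neighbors in `X_i` in `G`. -/
def gmSwitch {V : Type*} [Fintype V] (G : SimpleGraph V) {ℓ : ℕ} (f : V → Option (Fin ℓ)) :
    SimpleGraph V where
  Adj u v := (gmFlip G f u v ∧ ¬ G.Adj u v ∧ u ≠ v) ∨ (¬ gmFlip G f u v ∧ G.Adj u v)
  symm := by
    refine ⟨?_⟩
    intro u v h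
    have hsymm : gmFlip G f u v ↔ gmFlip G f v u := ⟨Or.symm, Or.symm⟩
    rcases h with ⟨h1, h2, h3⟩ | ⟨h1, h2⟩
    · exact Or.inl ⟨hsymm.mp h1, fun h => h2 (G.adj_symm h), h3.symm⟩
    · exact Or.inr ⟨fun h => h1 (hsymm.mpr h), G.adj_symm h2⟩
  loopless := by
    refine ⟨?_⟩
    intro u h
    rcases h with ⟨_, _, h3⟩ | ⟨_, h2⟩
    · exact h3 rfl
    · exact G.loopless.irrefl u h2

open scoped Classical in
/-- The adjacency matrix of `G`, over `ℝ`. -/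
noncomputable def adjMat {V : Type*} (G : SimpleGraph V) : Matrix V V ℝ :=
  Matrix.of fun u v => if G.Adj u v then 1 else 0

section GMAux

open scoped Classical

variable {V : Type*} [Fintype V] [DecidableEq V] {ℓ : ℕ}

/-- The Godsil–McKay switching matrix: `(2/|X_i|)·J - I` on each block `X_i`,
identity on `Y`, zero elsewhere. -/
noncomputable def Qmat (f : V → Option (Fin ℓ)) : Matrix V V ℝ :=
  Matrix.of fun u v =>
    match f u, f v with
    | none, none => if u = v then 1 else 0
    | some i, some j =>
        if i = j then 2 / ((Xset f i).card : ℝ) - (if u = v then 1 else 0) else 0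
    | _, _ => 0

variable {f : V → Option (Fin ℓ)}

lemma Qmat_none {u v : V} (hu : f u = none) :
    Qmat f u v = if u = v then 1 else 0 := by
  rcases h : f v with _ | j
  · simp [Qmat, hu, h]
  · have hne : u ≠ v := fun e => by rw [e, h] at hu; simp at hu
    simp [Qmat, hu, h, hne]

lemma Qmat_none' {u v : V} (hv : f v = none) :
    Qmat f u v = if u = v then 1 else 0 := by
  rcases h : f u with _ | i
  · simp [Qmat, hv, h]
  · have hne : u ≠ v := fun e => by rw [← e, h] at hv; simp at hv
    simp [Qmat, hv, h, hne]

lemma Qmat_some_some {u v : V} {i : Fin ℓ} (hu : f u = some i) (hv : f v = some i) :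
    Qmat f u v = 2 / ((Xset f i).card : ℝ) - (if u = v then 1 else 0) := by
  simp [Qmat, hu, hv]

lemma Qmat_some_ne {u v : V} {i j : Fin ℓ} (hu : f u = some i) (hv : f v = some j)
    (hij : i ≠ j) : Qmat f u v = 0 := by simp [Qmat, hu, hv, hij]

lemma Qmat_mix {u v : V} {i : Fin ℓ} (hu : f u = some i) (hv : f v = none) :
    Qmat f u v = 0 := by simp [Qmat, hu, hv]

lemma Qmat_mix' {u v : V} {i : Fin ℓ} (hu : f u = none) (hv : f v = some i) :
    Qmat f u v = 0 := by simp [Qmat, hu, hv]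

lemma mem_Xset {u : V} {i : Fin ℓ} : u ∈ Xset f i ↔ f u = some i := by simp [Xset]

lemma card_Xset_ne_zero {u : V} {i : Fin ℓ} (hu : f u = some i) :
    ((Xset f i).card : ℝ) ≠ 0 := by
  have : u ∈ Xset f i := mem_Xset.mpr hu
  exact_mod_cast Finset.card_ne_zero_of_mem this

lemma Qmat_mul_none {M : Matrix V V ℝ} {u v : V} (hu : f u = none) :
    (Qmat f * M) u v = M u v := by
  rw [Matrix.mul_apply, Finset.sum_eq_single u]
  · rw [Qmat_none hu]; simp
  · intro w _ hw; rw [Qmat_none hu, if_neg (Ne.symm hw), zero_mul]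
  · simp

lemma mul_Qmat_none {M : Matrix V V ℝ} {u v : V} (hv : f v = none) :
    (M * Qmat f) u v = M u v := by
  rw [Matrix.mul_apply, Finset.sum_eq_single v]
  · rw [Qmat_none' hv]; simp
  · intro w _ hw; rw [Qmat_none' hv, if_neg hw, mul_zero]
  · simp

lemma Qmat_mul_some {M : Matrix V V ℝ} {u v : V} {i : Fin ℓ} (hu : f u = some i) :
    (Qmat f * M) u v
      = 2 / ((Xset f i).card : ℝ) * (∑ w ∈ Xset f i, M w v) - M u v := by
  have hmem : u ∈ Xset f i := mem_Xset.mpr hu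
  have h1 : ∀ w ∈ Finset.univ, w ∉ Xset f i → Qmat f u w * M w v = 0 := by
    intro w _ hw
    rcases h : f w with _ | j
    · rw [Qmat_mix hu h, zero_mul]
    · have hij : i ≠ j := fun e => hw (mem_Xset.mpr (by rw [h, e]))
      rw [Qmat_some_ne hu h hij, zero_mul]
  rw [Matrix.mul_apply, ← Finset.sum_subset (Finset.subset_univ (Xset f i)) h1]
  have h2 : ∀ w ∈ Xset f i,
      Qmat f u w * M w v = 2 / ((Xset f i).card : ℝ) * M w v
        - (if u = w then M w v else 0) := by
    intro w hw
    rw [Qmat_some_some hu (mem_Xset.mp hw), sub_mul, ite_mul, one_mul, zero_mul]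
  rw [Finset.sum_congr rfl h2, Finset.sum_sub_distrib, ← Finset.mul_sum,
    Finset.sum_ite_eq _ u, if_pos hmem]

lemma mul_Qmat_some {M : Matrix V V ℝ} {u v : V} {j : Fin ℓ} (hv : f v = some j) :
    (M * Qmat f) u v
      = 2 / ((Xset f j).card : ℝ) * (∑ z ∈ Xset f j, M u z) - M u v := by
  have hmem : v ∈ Xset f j := mem_Xset.mpr hv
  have h1 : ∀ z ∈ Finset.univ, z ∉ Xset f j → M u z * Qmat f z v = 0 := by
    intro z _ hz
    rcases h : f z with _ | k
    · rw [Qmat_mix' h hv, mul_zero]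
    · have hkj : k ≠ j := fun e => hz (mem_Xset.mpr (by rw [h, e]))
      rw [Qmat_some_ne h hv hkj, mul_zero]
  rw [Matrix.mul_apply, ← Finset.sum_subset (Finset.subset_univ (Xset f j)) h1]
  have h2 : ∀ z ∈ Xset f j,
      M u z * Qmat f z v = 2 / ((Xset f j).card : ℝ) * M u z
        - (if z = v then M u z else 0) := by
    intro z hz
    rw [Qmat_some_some (mem_Xset.mp hz) hv, mul_sub, mul_ite, mul_one, mul_zero,
      mul_comm (M u z)]
  rw [Finset.sum_congr rfl h2, Finset.sum_sub_distrib, ← Finset.mul_sum,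
    Finset.sum_ite_eq' _ v, if_pos hmem]

lemma Qmat_sq : Qmat f * Qmat f = 1 := by
  ext u v
  rcases hu : f u with _ | i
  · rw [Qmat_mul_none hu, Qmat_none hu, Matrix.one_apply]
  · rw [Qmat_mul_some hu]
    rcases hv : f v with _ | j
    · have hne : u ≠ v := fun e => by rw [e, hv] at hu; simp at hu
      have hz : ∀ w ∈ Xset f i, Qmat f w v = 0 := fun w hw =>
        Qmat_mix (mem_Xset.mp hw) hv
      rw [Finset.sum_congr rfl hz, Qmat_mix hu hv, Matrix.one_apply_ne hne]
      simp
    · by_cases hij : i = j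
      · subst hij
        have hm0 : ((Xset f i).card : ℝ) ≠ 0 := card_Xset_ne_zero hu
        have hvm : v ∈ Xset f i := mem_Xset.mpr hv
        have hrow : ∀ w ∈ Xset f i, Qmat f w v
            = 2 / ((Xset f i).card : ℝ) - (if w = v then 1 else 0) := fun w hw =>
          Qmat_some_some (mem_Xset.mp hw) hv
        rw [Finset.sum_congr rfl hrow, Finset.sum_sub_distrib, Finset.sum_const,
          Finset.sum_ite_eq' _ v, if_pos hvm, Qmat_some_some hu hv, Matrix.one_apply,
          nsmul_eq_mul]
        field_simp
        ring
      · have hne : u ≠ v := fun e => by rw [e, hv] at hu; exact hij (Option.some.inj hu).symm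
        have hz : ∀ w ∈ Xset f i, Qmat f w v = 0 := fun w hw =>
          Qmat_some_ne (mem_Xset.mp hw) hv hij
        rw [Finset.sum_congr rfl hz, Qmat_some_ne hu hv hij, Matrix.one_apply_ne hne]
        simp

lemma adjMat_apply {G : SimpleGraph V} {u v : V} :
    adjMat G u v = if G.Adj u v then 1 else 0 := rfl

lemma sum_adjMat (G : SimpleGraph V) (v : V) (S : Finset V) :
    ∑ w ∈ S, adjMat G w v = (nbrsIn G v S : ℝ) := by
  have h : ∀ w ∈ S, adjMat G w v = if G.Adj v w then (1 : ℝ) else 0 := by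
    intro w _; rw [adjMat_apply]; simp [G.adj_comm]
  rw [Finset.sum_congr rfl h, Finset.sum_boole, nbrsIn]

lemma sum_adjMat' (G : SimpleGraph V) (u : V) (S : Finset V) :
    ∑ z ∈ S, adjMat G u z = (nbrsIn G u S : ℝ) := by
  have h : ∀ z ∈ S, adjMat G u z = if G.Adj u z then (1 : ℝ) else 0 := fun z _ =>
    adjMat_apply
  rw [Finset.sum_congr rfl h, Finset.sum_boole, nbrsIn]

lemma not_adj_of_nbrsIn_zero {G : SimpleGraph V} {u v : V} {S : Finset V}
    (h : nbrsIn G u S = 0) (hv : v ∈ S) : ¬ G.Adj u v := by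
  rw [nbrsIn, Finset.card_eq_zero] at h
  intro ha
  have : v ∈ S.filter (fun w => G.Adj u w) := Finset.mem_filter.mpr ⟨hv, ha⟩
  rw [h] at this
  simp at this

lemma adj_of_nbrsIn_card {G : SimpleGraph V} {u v : V} {S : Finset V}
    (h : nbrsIn G u S = S.card) (hv : v ∈ S) : G.Adj u v := by
  have heq := Finset.eq_of_subset_of_card_le (Finset.filter_subset (fun w => G.Adj u w) S) h.ge
  rw [← heq] at hv
  exact (Finset.mem_filter.mp hv).2

lemma edge_count (G : SimpleGraph V)
    (hf2 : ∀ i j : Fin ℓ, ∀ u ∈ Xset f i, ∀ v ∈ Xset f i,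
      nbrsIn G u (Xset f j) = nbrsIn G v (Xset f j))
    {i j : Fin ℓ} {u v : V} (hu : u ∈ Xset f i) (hv : v ∈ Xset f j) :
    (Xset f j).card * nbrsIn G v (Xset f i)
      = (Xset f i).card * nbrsIn G u (Xset f j) := by
  have key : ∑ z ∈ Xset f j, nbrsIn G z (Xset f i)
      = ∑ w ∈ Xset f i, nbrsIn G w (Xset f j) := by
    simp only [nbrsIn, Finset.card_filter]
    rw [Finset.sum_comm]
    refine Finset.sum_congr rfl fun w _ => Finset.sum_congr rfl fun z _ => ?_
    exact if_congr (G.adj_comm z w) rfl rfl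
  calc (Xset f j).card * nbrsIn G v (Xset f i)
      = ∑ z ∈ Xset f j, nbrsIn G z (Xset f i) := by
        rw [Finset.sum_congr rfl (fun z hz => hf2 j i z hz v hv), Finset.sum_const,
          smul_eq_mul]
    _ = ∑ w ∈ Xset f i, nbrsIn G w (Xset f j) := key
    _ = (Xset f i).card * nbrsIn G u (Xset f j) := by
        rw [Finset.sum_congr rfl (fun w hw => hf2 i j w hw u hu), Finset.sum_const,
          smul_eq_mul]

lemma gmSwitch_adj {G : SimpleGraph V} {u v : V} :
    (gmSwitch G f).Adj u v ↔
      (gmFlip G f u v ∧ ¬ G.Adj u v ∧ u ≠ v) ∨ (¬ gmFlip G f u v ∧ G.Adj u v) :=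
  Iff.rfl

lemma switch_entry_no_flip {G : SimpleGraph V} {u v : V} (h : ¬ gmFlip G f u v) :
    adjMat (gmSwitch G f) u v = adjMat G u v := by
  rw [adjMat_apply, adjMat_apply]
  by_cases ha : G.Adj u v
  · rw [if_pos ha, if_pos (gmSwitch_adj.mpr (Or.inr ⟨h, ha⟩))]
  · rw [if_neg ha, if_neg]
    intro hadj
    rcases gmSwitch_adj.mp hadj with ⟨h1, _, _⟩ | ⟨_, h2⟩
    exacts [h h1, ha h2]

lemma switch_entry_flip {G : SimpleGraph V} {u v : V} (h : gmFlip G f u v)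
    (hne : u ≠ v) : adjMat (gmSwitch G f) u v = 1 - adjMat G u v := by
  rw [adjMat_apply, adjMat_apply]
  by_cases ha : G.Adj u v
  · rw [if_pos ha, if_neg]
    · norm_num
    · intro hadj
      rcases gmSwitch_adj.mp hadj with ⟨_, h2, _⟩ | ⟨h1, _⟩
      exacts [h2 ha, h1 h]
  · rw [if_neg ha, if_pos (gmSwitch_adj.mpr (Or.inl ⟨h, ha, hne⟩))]
    norm_num

lemma gmFlip_none_none {G : SimpleGraph V} {u v : V} (hu : f u = none)
    (hv : f v = none) : ¬ gmFlip G f u v := by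
  rintro (⟨i, -, h2, -⟩ | ⟨i, -, h2, -⟩)
  · rw [hv] at h2; simp at h2
  · rw [hu] at h2; simp at h2

lemma gmFlip_some_some {G : SimpleGraph V} {u v : V} {i j : Fin ℓ} (hu : f u = some i)
    (hv : f v = some j) : ¬ gmFlip G f u v := by
  rintro (⟨k, h1, -, -⟩ | ⟨k, h1, -, -⟩)
  · rw [hu] at h1; simp at h1
  · rw [hv] at h1; simp at h1

lemma Qmat_conj {G : SimpleGraph V} (hf : IsGMPartition G f) :
    Qmat f * adjMat G * Qmat f = adjMat (gmSwitch G f) := by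
  obtain ⟨hf1, hf2⟩ := hf
  ext u v
  rcases hv : f v with _ | j
  · rw [mul_Qmat_none hv]
    rcases hu : f u with _ | i
    · rw [Qmat_mul_none hu, switch_entry_no_flip (gmFlip_none_none hu hv)]
    · -- u ∈ X_i, v ∈ Y
      rw [Qmat_mul_some hu, sum_adjMat]
      have hvY : v ∈ Yset f := by simp [Yset, hv]
      have hm0 : ((Xset f i).card : ℝ) ≠ 0 := card_Xset_ne_zero hu
      have hne : u ≠ v := fun e => by rw [e, hv] at hu; simp at hu
      have humem : u ∈ Xset f i := mem_Xset.mpr hu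
      rcases hf1 v hvY i with h0 | hhalf | hall
      · have hA : adjMat G u v = 0 := by
          rw [adjMat_apply, if_neg]
          intro ha
          exact not_adj_of_nbrsIn_zero h0 humem (G.adj_symm ha)
        have hflip : ¬ gmFlip G f u v := by
          rintro (⟨k, h1, -, -⟩ | ⟨k, -, h2, h3⟩)
          · rw [hu] at h1; simp at h1
          · rw [hu] at h2
            have hk : k = i := (Option.some.inj h2).symm
            subst hk
            rw [h0, mul_zero] at h3
            exact hm0 (by exact_mod_cast h3.symm)
        rw [switch_entry_no_flip hflip, h0, hA]
        simp
      · have hflip : gmFlip G f u v := Or.inr ⟨i, hv, hu, hhalf⟩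
        rw [switch_entry_flip hflip hne, sub_left_inj, div_mul_eq_mul_div,
          div_eq_one_iff_eq hm0]
        exact_mod_cast hhalf
      · have hA : adjMat G u v = 1 := by
          rw [adjMat_apply, if_pos (G.adj_symm (adj_of_nbrsIn_card hall humem))]
        have hflip : ¬ gmFlip G f u v := by
          rintro (⟨k, h1, -, -⟩ | ⟨k, -, h2, h3⟩)
          · rw [hu] at h1; simp at h1
          · rw [hu] at h2
            rw [show k = i from (Option.some.inj h2).symm, hall] at h3
            exact hm0 (by exact_mod_cast (show (Xset f i).card = 0 by omega))
        rw [switch_entry_no_flip hflip, hall, hA, div_mul_cancel₀ _ hm0]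
        norm_num
  · rw [mul_Qmat_some hv]
    have hvmem : v ∈ Xset f j := mem_Xset.mpr hv
    have hmj0 : ((Xset f j).card : ℝ) ≠ 0 := card_Xset_ne_zero hv
    rcases hu : f u with _ | i
    · -- u ∈ Y, v ∈ X_j
      have hs : ∀ z ∈ Xset f j, (Qmat f * adjMat G) u z = adjMat G u z := fun z _ =>
        Qmat_mul_none hu
      rw [Finset.sum_congr rfl hs, Qmat_mul_none hu, sum_adjMat']
      have huY : u ∈ Yset f := by simp [Yset, hu]
      have hne : u ≠ v := fun e => by rw [e, hv] at hu; simp at hu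
      rcases hf1 u huY j with h0 | hhalf | hall
      · have hA : adjMat G u v = 0 := by
          rw [adjMat_apply, if_neg (not_adj_of_nbrsIn_zero h0 hvmem)]
        have hflip : ¬ gmFlip G f u v := by
          rintro (⟨k, -, h2, h3⟩ | ⟨k, h1, -, -⟩)
          · rw [hv] at h2
            have hk : k = j := (Option.some.inj h2).symm
            subst hk
            rw [h0, mul_zero] at h3
            exact hmj0 (by exact_mod_cast h3.symm)
          · rw [hv] at h1; simp at h1
        rw [switch_entry_no_flip hflip, h0, hA]
        simp
      · have hflip : gmFlip G f u v := Or.inl ⟨j, hu, hv, hhalf⟩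
        rw [switch_entry_flip hflip hne, sub_left_inj, div_mul_eq_mul_div,
          div_eq_one_iff_eq hmj0]
        exact_mod_cast hhalf
      · have hA : adjMat G u v = 1 := by
          rw [adjMat_apply, if_pos (adj_of_nbrsIn_card hall hvmem)]
        have hflip : ¬ gmFlip G f u v := by
          rintro (⟨k, -, h2, h3⟩ | ⟨k, h1, -, -⟩)
          · rw [hv] at h2
            rw [show k = j from (Option.some.inj h2).symm, hall] at h3
            exact hmj0 (by exact_mod_cast (show (Xset f j).card = 0 by omega))
          · rw [hv] at h1; simp at h1
        rw [switch_entry_no_flip hflip, hall, hA, div_mul_cancel₀ _ hmj0]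
        norm_num
    · -- u ∈ X_i, v ∈ X_j
      have humem : u ∈ Xset f i := mem_Xset.mpr hu
      have hmi0 : ((Xset f i).card : ℝ) ≠ 0 := card_Xset_ne_zero hu
      have hs : ∀ z ∈ Xset f j, (Qmat f * adjMat G) u z
          = 2 / ((Xset f i).card : ℝ) * (nbrsIn G v (Xset f i) : ℝ) - adjMat G u z := by
        intro z hz
        rw [Qmat_mul_some hu, sum_adjMat, hf2 j i z hz v hvmem]
      rw [Finset.sum_congr rfl hs, Finset.sum_sub_distrib, Finset.sum_const,
        sum_adjMat', nsmul_eq_mul, Qmat_mul_some hu, sum_adjMat,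
        switch_entry_no_flip (gmFlip_some_some hu hv)]
      have hcount : ((Xset f j).card : ℝ) * (nbrsIn G v (Xset f i) : ℝ)
          = ((Xset f i).card : ℝ) * (nbrsIn G u (Xset f j) : ℝ) := by
        exact_mod_cast edge_count G hf2 humem hvmem
      field_simp
      ring_nf
      ring_nf at hcount
      nlinarith [hcount]

end GMAux

lemma charpoly_conj_of_sq_one {V : Type*} [Fintype V] [DecidableEq V] {Q A : Matrix V V ℝ} (hQ : Q * Q = 1) :
    (Q * A * Q).charpoly = A.charpoly := by
  classical
  have hQC : Q.map (Polynomial.C : ℝ →+* ℝ[X]) * Q.map Polynomial.C = 1 := by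
    rw [← Matrix.map_mul, hQ, Matrix.map_one _ (map_zero _) (map_one _)]
  have hcm : Matrix.charmatrix (Q * A * Q)
      = Q.map Polynomial.C * Matrix.charmatrix A * Q.map Polynomial.C := by
    have hcomm := Matrix.scalar_commute (X : ℝ[X]) (fun r => Commute.all _ _)
      (Q.map (Polynomial.C : ℝ →+* ℝ[X]))
    rw [Matrix.charmatrix, Matrix.charmatrix, RingHom.mapMatrix_apply,
      RingHom.mapMatrix_apply, mul_sub, sub_mul]
    congr 1
    · rw [← hcomm.eq, mul_assoc, hQC, mul_one]
    · rw [Matrix.map_mul, Matrix.map_mul]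
  rw [Matrix.charpoly, Matrix.charpoly, hcm, Matrix.det_mul, Matrix.det_mul,
    mul_right_comm, ← Matrix.det_mul, hQC, Matrix.det_one, one_mul]


/-- **Godsil–McKay switching preserves the spectrum.** If `{X_1, …, X_ℓ, Y}` is a
Godsil–McKay switching partition of the finite simple graph `G`, then `G` and the switched
graph `G'` are cospectral: their real adjacency matrices have equal characteristic
polynomials. -/
theorem godsilMcKay_cospectral {V : Type*} [Fintype V] [DecidableEq V]
    (G : SimpleGraph V) {ℓ : ℕ} (f : V → Option (Fin ℓ)) (hf : IsGMPartition G f) :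
    (adjMat G).charpoly = (adjMat (gmSwitch G f)).charpoly := by
  rw [← Qmat_conj hf, charpoly_conj_of_sq_one (Qmat_sq (f := f))]
end

section
/- For every n ≥ 1, the characteristic polynomial of the adjacency matrix (over ℝ) of the path graph P_n on n vertices equals the product over j = 1, …, n of (X − 2·cos(jπ/(n+1))); equivalently, the multiset of eigenvalues of the adjacency matrix of P_n is {2·cos(jπ/(n+1)) : j = 1, …, n}. -/
open Finset SimpleGraph Polynomial

noncomputable def pf (i j : ℕ) : Polynomial ℝ :=
  if i = j then X else if i + 1 = j ∨ j + 1 = i then -1 else 0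

noncomputable def pM (n : ℕ) : Matrix (Fin n) (Fin n) (Polynomial ℝ) :=
  Matrix.of fun i j => pf i j

lemma pM_apply (n : ℕ) (i j : Fin n) : pM n i j = pf i j := rfl

lemma pf_shift (k i j : ℕ) : pf (i + k) (j + k) = pf i j := by
  unfold pf; split_ifs <;> first | rfl | omega

lemma pf_zero (i j : ℕ) (h1 : i ≠ j) (h2 : i + 1 ≠ j) (h3 : j + 1 ≠ i) : pf i j = 0 := by
  unfold pf; split_ifs <;> first | rfl | omega

lemma pf_adj (i j : ℕ) (h : i + 1 = j ∨ j + 1 = i) : pf i j = -1 := by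
  unfold pf; split_ifs <;> first | rfl | omega

lemma charmatrix_path (n : ℕ) :
    Matrix.charmatrix (adjMat (SimpleGraph.pathGraph n)) = pM n := by
  refine Matrix.ext fun i j => ?_
  by_cases h : i = j
  · subst h
    simp [Matrix.charmatrix_apply_eq, adjMat, pM, pf]
  · have hv : (i : ℕ) ≠ (j : ℕ) := fun hh => h (Fin.ext hh)
    rw [Matrix.charmatrix_apply_ne _ _ _ h]
    simp only [adjMat, Matrix.of_apply, pM, pathGraph_adj, pf, if_neg hv]
    split_ifs <;> simp

lemma pM_sub_one (n : ℕ) :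
    (pM (n + 1)).submatrix Fin.succ Fin.succ = pM n := by
  refine Matrix.ext fun i j => ?_
  simp only [Matrix.submatrix_apply, pM_apply, Fin.val_succ]
  exact pf_shift 1 i j

noncomputable def pS : ℕ → Polynomial ℝ
  | 0 => 1
  | 1 => X
  | (n + 2) => X * pS (n + 1) - pS n

lemma detM_rec (n : ℕ) : (pM (n + 2)).det = X * (pM (n + 1)).det - (pM n).det := by
  rw [Matrix.det_succ_row_zero, Fin.sum_univ_succ, Fin.sum_univ_succ]
  have h0 : (pM (n+2)) 0 0 = X := rfl
  have h1 : (pM (n+2)) 0 ((0 : Fin (n+1)).succ) = -1 := by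
    rw [pM_apply]; exact pf_adj _ _ (by simp)
  have htail : ∀ j : Fin n, (pM (n+2)) 0 (j.succ.succ) = 0 := by
    intro j
    rw [pM_apply]
    exact pf_zero _ _ (by simp [Fin.val_succ]) (by simp [Fin.val_succ])
      (by simp [Fin.val_succ])
  have hsub0 : ((pM (n+2)).submatrix Fin.succ (Fin.succAbove 0)) = pM (n+1) := by
    rw [Fin.succAbove_zero]; exact pM_sub_one (n+1)
  have hD : ((pM (n+2)).submatrix Fin.succ (Fin.succAbove (0 : Fin (n+1)).succ)).det
      = - (pM n).det := by
    rw [Matrix.det_succ_column_zero, Fin.sum_univ_succ]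
    have hd0 : ((pM (n+2)).submatrix Fin.succ (Fin.succAbove (0 : Fin (n+1)).succ)) 0 0 = -1 := by
      simp only [Matrix.submatrix_apply, Fin.succ_succAbove_zero, pM_apply]
      exact pf_adj _ _ (by simp)
    have hdtail : ∀ i : Fin n,
        pM (n+2) i.succ.succ ((0 : Fin (n+1)).succ.succAbove 0) = 0 := by
      intro i
      rw [Fin.succ_succAbove_zero, pM_apply]
      exact pf_zero _ _ (by simp [Fin.val_succ]) (by simp [Fin.val_succ])
        (by simp [Fin.val_succ])
    have hdsub : (((pM (n+2)).submatrix Fin.succ (Fin.succAbove (0 : Fin (n+1)).succ)).submatrix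
        (Fin.succAbove 0) Fin.succ) = pM n := by
      rw [Fin.succAbove_zero]
      refine Matrix.ext fun i j => ?_
      simp only [Matrix.submatrix_apply, Fin.succ_succAbove_succ, pM_apply, Fin.val_succ,
        Fin.succAbove_zero]
      exact pf_shift 2 i j
    rw [hd0, hdsub]
    simp only [Matrix.submatrix_apply, hdtail]
    simp
  rw [h0, h1, hsub0, hD]
  simp only [htail]
  simp
  ring

lemma detM (n : ℕ) : (pM n).det = pS n := by
  induction n using Nat.strong_induction_on with
  | _ n ih =>
    match n with
    | 0 => simp [pM, pS]
    | 1 => rw [Matrix.det_fin_one, pM_apply]; show pf 0 0 = pS 1; simp [pf, pS]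
    | (m + 2) =>
      rw [detM_rec, ih (m+1) (by omega), ih m (by omega)]
      rfl

lemma pS_comp (n : ℕ) : pS n = (Chebyshev.U ℝ n).comp (C (1/2) * X) := by
  induction n using Nat.strong_induction_on with
  | _ n ih =>
    match n with
    | 0 => simp [pS, Chebyshev.U_zero]
    | 1 =>
      show X = _
      rw [show ((1:ℕ):ℤ) = 1 by norm_num, Chebyshev.U_one]
      have hC : (C (1/2:ℝ)) * 2 = 1 := by
        rw [← map_ofNat (C : ℝ →+* Polynomial ℝ) 2, ← C_mul]; norm_num
      simp only [mul_comp, X_comp, ofNat_comp]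
      linear_combination (-X) * hC
    | (m + 2) =>
      show X * pS (m+1) - pS m = _
      rw [ih (m+1) (by omega), ih m (by omega)]
      rw [show ((m + 2 : ℕ) : ℤ) = (m : ℤ) + 2 by push_cast; ring, Chebyshev.U_add_two]
      push_cast
      have hC : (C (1/2:ℝ)) * 2 = 1 := by
        rw [← map_ofNat (C : ℝ →+* Polynomial ℝ) 2, ← C_mul]; norm_num
      simp only [sub_comp, mul_comp, X_comp, ofNat_comp]
      linear_combination (-X * (Chebyshev.U ℝ ((m:ℤ) + 1)).comp (C (1/2) * X)) * hC

lemma pS_eval (n : ℕ) (θ : ℝ) :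
    (pS n).eval (2 * Real.cos θ) * Real.sin θ = Real.sin ((n + 1) * θ) := by
  rw [pS_comp, eval_comp]
  have : eval (2 * Real.cos θ) (C (1/2) * X) = Real.cos θ := by simp
  rw [this]
  have h := Polynomial.Chebyshev.U_real_cos θ (n : ℤ)
  push_cast at h
  exact_mod_cast h

lemma pS_monic (n : ℕ) : (pS n).Monic ∧ (pS n).natDegree = n := by
  induction n using Nat.strong_induction_on with
  | _ n ih =>
    match n with
    | 0 => exact ⟨monic_one, natDegree_one⟩
    | 1 => exact ⟨monic_X, natDegree_X⟩
    | (m + 2) =>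
      obtain ⟨h1m, h1d⟩ := ih (m+1) (by omega)
      obtain ⟨h0m, h0d⟩ := ih m (by omega)
      have hXm : (X * pS (m+1)).Monic := monic_X.mul h1m
      have hXd : (X * pS (m+1)).natDegree = m + 2 := by
        rw [natDegree_mul X_ne_zero h1m.ne_zero, natDegree_X, h1d]; ring
      have hlt : (pS m).degree < (X * pS (m+1)).degree := by
        rw [degree_eq_natDegree hXm.ne_zero, hXd]
        apply lt_of_le_of_lt degree_le_natDegree
        rw [h0d]
        exact_mod_cast (by omega : m < m + 2)
      refine ⟨hXm.sub_of_left hlt, ?_⟩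
      show (X * pS (m+1) - pS m).natDegree = m + 2
      rw [natDegree_sub_eq_left_of_natDegree_lt, hXd]
      rw [hXd, h0d]; omega

lemma pS_prod (n : ℕ) :
    pS n = ∏ j ∈ Finset.Icc 1 n,
      (X - C (2 * Real.cos ((j : ℝ) * Real.pi / ((n : ℝ) + 1)))) := by
  set r : ℕ → ℝ := fun j => 2 * Real.cos ((j : ℝ) * Real.pi / ((n : ℝ) + 1)) with hr
  have hn1 : (0 : ℝ) < (n : ℝ) + 1 := by positivity
  have hθmem : ∀ j ∈ Finset.Icc 1 n,
      (j : ℝ) * Real.pi / ((n : ℝ) + 1) ∈ Set.Icc 0 Real.pi := by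
    intro j hj
    rw [Finset.mem_Icc] at hj
    constructor
    · positivity
    · rw [div_le_iff₀ hn1]
      have : (j : ℝ) ≤ (n : ℝ) + 1 := by
        have : (j : ℝ) ≤ (n : ℝ) := by exact_mod_cast hj.2
        linarith
      nlinarith [Real.pi_pos]
  have hθpos : ∀ j ∈ Finset.Icc 1 n, 0 < (j : ℝ) * Real.pi / ((n : ℝ) + 1) := by
    intro j hj
    rw [Finset.mem_Icc] at hj
    have : (1 : ℝ) ≤ (j : ℝ) := by exact_mod_cast hj.1
    have := Real.pi_pos
    positivity
  have hθlt : ∀ j ∈ Finset.Icc 1 n, (j : ℝ) * Real.pi / ((n : ℝ) + 1) < Real.pi := by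
    intro j hj
    rw [Finset.mem_Icc] at hj
    rw [div_lt_iff₀ hn1]
    have : (j : ℝ) < (n : ℝ) + 1 := by
      have : (j : ℝ) ≤ (n : ℝ) := by exact_mod_cast hj.2
      linarith
    nlinarith [Real.pi_pos]
  have hroot : ∀ j ∈ Finset.Icc 1 n, (pS n).IsRoot (r j) := by
    intro j hj
    have hsin : Real.sin ((j : ℝ) * Real.pi / ((n : ℝ) + 1)) ≠ 0 :=
      ne_of_gt (Real.sin_pos_of_pos_of_lt_pi (hθpos j hj) (hθlt j hj))
    have h := pS_eval n ((j : ℝ) * Real.pi / ((n : ℝ) + 1))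
    have harg : ((n : ℝ) + 1) * ((j : ℝ) * Real.pi / ((n : ℝ) + 1)) = (j : ℝ) * Real.pi := by
      field_simp
    rw [harg, Real.sin_nat_mul_pi] at h
    exact (mul_eq_zero.mp h).resolve_right hsin
  have hinj : Set.InjOn r (Finset.Icc 1 n) := by
    intro j hj k hk hjk
    have hcos : Real.cos ((j : ℝ) * Real.pi / ((n : ℝ) + 1))
        = Real.cos ((k : ℝ) * Real.pi / ((n : ℝ) + 1)) := by
      have : (2:ℝ) ≠ 0 := two_ne_zero
      simp only [hr] at hjk
      linarith
    have heq := Real.strictAntiOn_cos.injOn (hθmem j hj) (hθmem k hk) hcos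
    rw [div_left_inj' hn1.ne', mul_left_inj' Real.pi_ne_zero] at heq
    exact_mod_cast heq
  have hS0 : pS n ≠ 0 := (pS_monic n).1.ne_zero
  have hle : ((Finset.Icc 1 n).val.map r) ≤ (pS n).roots := by
    have hnd : ((Finset.Icc 1 n).val.map r).Nodup :=
      (Finset.Icc 1 n).nodup.map_on (fun a ha b hb h => hinj ha hb h)
    rw [Multiset.le_iff_subset hnd]
    intro a ha
    rw [Multiset.mem_map] at ha
    obtain ⟨j, hj, rfl⟩ := ha
    rw [Polynomial.mem_roots hS0]
    exact hroot j hj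
  have hdvd : (∏ j ∈ Finset.Icc 1 n, (X - C (r j))) ∣ pS n := by
    have := (Multiset.prod_X_sub_C_dvd_iff_le_roots hS0 ((Finset.Icc 1 n).val.map r)).mpr hle
    rw [Multiset.map_map] at this
    rw [Finset.prod_eq_multiset_prod]
    exact this
  have hqm : (∏ j ∈ Finset.Icc 1 n, (X - C (r j))).Monic :=
    monic_prod_of_monic _ _ (fun j _ => monic_X_sub_C _)
  have hqd : (∏ j ∈ Finset.Icc 1 n, (X - C (r j))).natDegree = n := by
    rw [natDegree_prod _ _ (fun j _ => X_sub_C_ne_zero _)]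
    simp [Nat.card_Icc]
  exact Polynomial.eq_of_monic_of_dvd_of_natDegree_le hqm (pS_monic n).1 hdvd
    (by rw [hqd, (pS_monic n).2])

/-- The characteristic polynomial of the adjacency matrix of the path graph `P_n` on `n`
vertices is `∏_{j=1}^{n} (X - 2 cos(jπ/(n+1)))`. -/
theorem pathGraph_charpoly (n : ℕ) (hn : 1 ≤ n) :
    (adjMat (SimpleGraph.pathGraph n)).charpoly =
      ∏ j ∈ Finset.Icc 1 n,
        (Polynomial.X - Polynomial.C (2 * Real.cos ((j : ℝ) * Real.pi / ((n : ℝ) + 1)))) := by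
  unfold Matrix.charpoly
  rw [charmatrix_path, detM, pS_prod]
end
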